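/- Let a, b ≥ 1 and s ∈ ℝ. The function g : ℝ → ℝ defined by g(x) = ((a/2)² + (x/2)²)^{(a−1)/2} · ((b/2)² + ((s−x)/2)²)^{(b−1)/2} · exp(−x·arctan(x/a) − (s−x)·arctan((s−x)/b)) is log-concave on ℝ, i.e., for all x, y ∈ ℝ and t ∈ [0,1], g(t·x + (1−t)·y) ≥ g(x)^t · g(y)^{1−t}. -/

import Mathlib

open Real

noncomputable def fA (a x : ℝ) : ℝ :=
  (a - 1) / 2 * Real.log ((a / 2) ^ 2 + (x / 2) ^ 2) - x * Real.arctan (x / a)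

noncomputable def fA' (a x : ℝ) : ℝ := -Real.arctan (x / a) - x / (a ^ 2 + x ^ 2)

lemma fA_hasDeriv (a : ℝ) (ha : 1 ≤ a) (x : ℝ) :
    HasDerivAt (fA a) (fA' a x) x := by
  have ha0 : 0 < a := lt_of_lt_of_le one_pos ha
  have hd : 0 < a ^ 2 + x ^ 2 := by positivity
  have hu : 0 < (a / 2) ^ 2 + (x / 2) ^ 2 := by positivity
  have h1 : HasDerivAt (fun y : ℝ => (a / 2) ^ 2 + (y / 2) ^ 2)
      (2 * (x / 2) ^ 1 * (1 / 2)) x :=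
    (((hasDerivAt_id x).div_const 2).pow 2).const_add ((a / 2) ^ 2)
  have h2 : HasDerivAt (fun y : ℝ =>
      (a - 1) / 2 * Real.log ((a / 2) ^ 2 + (y / 2) ^ 2))
      ((a - 1) / 2 * ((2 * (x / 2) ^ 1 * (1 / 2)) / ((a / 2) ^ 2 + (x / 2) ^ 2))) x :=
    (h1.log hu.ne').const_mul _
  have h3 : HasDerivAt (fun y : ℝ => Real.arctan (y / a))
      (1 / (1 + (x / a) ^ 2) * (1 / a)) x :=
    HasDerivAt.comp (h₂ := Real.arctan) x (Real.hasDerivAt_arctan (x / a)) ((hasDerivAt_id x).div_const a)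
  have h4 : HasDerivAt (fun y : ℝ => y * Real.arctan (y / a))
      (1 * Real.arctan (x / a) + x * (1 / (1 + (x / a) ^ 2) * (1 / a))) x :=
    (hasDerivAt_id x).mul h3
  have h5 := h2.sub h4
  refine h5.congr_deriv ?_
  unfold fA'
  have h1a : 1 + (x / a) ^ 2 ≠ 0 := by positivity
  field_simp
  ring

lemma fA'_hasDeriv (a : ℝ) (ha : 1 ≤ a) (x : ℝ) :
    HasDerivAt (fA' a) (-(a / (a ^ 2 + x ^ 2)) - (a ^ 2 - x ^ 2) / (a ^ 2 + x ^ 2) ^ 2) x := by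
  have ha0 : 0 < a := lt_of_lt_of_le one_pos ha
  have hd : 0 < a ^ 2 + x ^ 2 := by positivity
  have h3 : HasDerivAt (fun y : ℝ => Real.arctan (y / a))
      (1 / (1 + (x / a) ^ 2) * (1 / a)) x :=
    HasDerivAt.comp (h₂ := Real.arctan) x (Real.hasDerivAt_arctan (x / a)) ((hasDerivAt_id x).div_const a)
  have hden : HasDerivAt (fun y : ℝ => a ^ 2 + y ^ 2) (2 * x ^ 1 * 1) x :=
    (((hasDerivAt_id x).pow 2).const_add (a ^ 2))
  have h6 : HasDerivAt (fun y : ℝ => y / (a ^ 2 + y ^ 2))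
      ((1 * (a ^ 2 + x ^ 2) - x * (2 * x ^ 1 * 1)) / (a ^ 2 + x ^ 2) ^ 2) x :=
    (hasDerivAt_id x).div hden hd.ne'
  have h7 := (h3.neg).sub h6
  refine h7.congr_deriv ?_
  have h1a : 1 + (x / a) ^ 2 ≠ 0 := by positivity
  field_simp
  ring

lemma fA_concave (a : ℝ) (ha : 1 ≤ a) : ConcaveOn ℝ Set.univ (fA a) := by
  have ha0 : 0 < a := lt_of_lt_of_le one_pos ha
  apply concaveOn_of_hasDerivWithinAt2_nonpos (f' := fA' a)
    (f'' := fun x => -(a / (a ^ 2 + x ^ 2)) - (a ^ 2 - x ^ 2) / (a ^ 2 + x ^ 2) ^ 2)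
    convex_univ
  · exact fun x _ => ((fA_hasDeriv a ha x).continuousAt).continuousWithinAt
  · exact fun x _ => (fA_hasDeriv a ha x).hasDerivWithinAt
  · exact fun x _ => (fA'_hasDeriv a ha x).hasDerivWithinAt
  · intro x _
    have hd : 0 < a ^ 2 + x ^ 2 := by positivity
    rw [sub_nonpos, neg_le, ← neg_div, div_le_div_iff₀ (by positivity) hd]
    nlinarith [sq_nonneg x, sq_nonneg a, mul_pos ha0 hd]

/-- For `a, b ≥ 1` and `s ∈ ℝ`, the function
`g(x) = ((a/2)² + (x/2)²)^((a−1)/2) · ((b/2)² + ((s−x)/2)²)^((b−1)/2) ·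
exp(−x·arctan(x/a) − (s−x)·arctan((s−x)/b))` is log-concave on ℝ. -/
theorem stmt0 (a b s : ℝ) (ha : 1 ≤ a) (hb : 1 ≤ b)
    (g : ℝ → ℝ)
    (hg : ∀ x : ℝ, g x =
      ((a / 2) ^ 2 + (x / 2) ^ 2) ^ ((a - 1) / 2) *
      ((b / 2) ^ 2 + ((s - x) / 2) ^ 2) ^ ((b - 1) / 2) *
      Real.exp (-x * Real.arctan (x / a) - (s - x) * Real.arctan ((s - x) / b))) :
    ∀ x y t : ℝ, 0 ≤ t → t ≤ 1 →
      g (t * x + (1 - t) * y) ≥ g x ^ t * g y ^ (1 - t) := by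
  have ha0 : 0 < a := lt_of_lt_of_le one_pos ha
  have hb0 : 0 < b := lt_of_lt_of_le one_pos hb
  have key : ∀ x : ℝ, g x = Real.exp (fA a x + fA b (s - x)) := by
    intro x
    rw [hg, Real.rpow_def_of_pos (by positivity), Real.rpow_def_of_pos (by positivity),
      ← Real.exp_add, ← Real.exp_add]
    congr 1
    unfold fA
    ring
  intro x y t ht0 ht1
  have hcA := (fA_concave a ha).2 (Set.mem_univ x) (Set.mem_univ y) ht0
    (by linarith : (0:ℝ) ≤ 1 - t) (by ring)
  have hcB := (fA_concave b hb).2 (Set.mem_univ (s - x)) (Set.mem_univ (s - y)) ht0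
    (by linarith : (0:ℝ) ≤ 1 - t) (by ring)
  simp only [smul_eq_mul] at hcA hcB
  have harg : t * (s - x) + (1 - t) * (s - y) = s - (t * x + (1 - t) * y) := by ring
  rw [harg] at hcB
  rw [key, key, key, ← Real.exp_mul, ← Real.exp_mul, ← Real.exp_add]
  apply Real.exp_le_exp.2
  nlinarith [hcA, hcB]
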